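/- f(k,k) = 0 for every k ≥ 2. That is, the graph K_k + K_k (the disjoint union of two copies of K_k) is not Ramsey-equivalent to K_k. -/

import Mathlib

/-- A monochromatic copy of `H` in `G` of colour `c` under the edge-colouring `χ`. -/
def MonoCopy {α β : Type*} (H : SimpleGraph α) (G : SimpleGraph β)
    (χ : β → β → Bool) (c : Bool) : Prop :=
  ∃ f : α ↪ β, (∀ a b, H.Adj a b → G.Adj (f a) (f b)) ∧
    ∀ a b, H.Adj a b → χ (f a) (f b) = c

/-- `G` is Ramsey for `H`: every symmetric 2-colouring of the edges of `G`
contains a monochromatic copy of `H`. -/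
def IsRamseyFor {α β : Type*} (H : SimpleGraph α) (G : SimpleGraph β) : Prop :=
  ∀ χ : β → β → Bool, (∀ x y, χ x y = χ y x) → ∃ c, MonoCopy H G χ c
/-- `H` and `H'` are Ramsey-equivalent: every graph is Ramsey for `H` iff it is for `H'`. -/
def RamseyEquiv {α β : Type*} (H : SimpleGraph α) (H' : SimpleGraph β) : Prop :=
  ∀ (n : ℕ) (G : SimpleGraph (Fin n)), IsRamseyFor H G ↔ IsRamseyFor H' G
/-- `K_k + f·K_t`: the disjoint union of `K_k` and `f` copies of `K_t`. -/
def cliquesUnion (k f t : ℕ) : SimpleGraph (Fin k ⊕ Fin f × Fin t) :=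
  SimpleGraph.fromRel (fun x y =>
    (∃ a b, x = Sum.inl a ∧ y = Sum.inl b) ∨
    (∃ i a b, x = Sum.inr (i, a) ∧ y = Sum.inr (i, b)))

lemma ramsey_aux (N : ℕ) : ∀ s t : ℕ, s + t ≤ N → ∃ n : ℕ,
    ∀ (V : Type) [DecidableEq V] (χ : V → V → Bool), (∀ x y, χ x y = χ y x) →
    ∀ S : Finset V, n ≤ S.card →
    ∃ (c : Bool) (A : Finset V), A ⊆ S ∧
      (∀ x ∈ A, ∀ y ∈ A, x ≠ y → χ x y = c) ∧
      ((c = true ∧ A.card = s) ∨ (c = false ∧ A.card = t)) := by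
  induction N with
  | zero =>
    intro s t hst
    exact ⟨0, fun V _ χ hsym S hS => ⟨true, ∅, by simp, by simp, Or.inl ⟨rfl, by simp; omega⟩⟩⟩
  | succ N IH =>
    intro s t hst
    match s, t with
    | 0, t => exact ⟨0, fun V _ χ hsym S hS => ⟨true, ∅, by simp, by simp, Or.inl ⟨rfl, by simp⟩⟩⟩
    | s+1, 0 => exact ⟨0, fun V _ χ hsym S hS => ⟨false, ∅, by simp, by simp, Or.inr ⟨rfl, by simp⟩⟩⟩
    | s+1, t+1 =>
      obtain ⟨n1, h1⟩ := IH s (t+1) (by omega)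
      obtain ⟨n2, h2⟩ := IH (s+1) t (by omega)
      refine ⟨n1 + n2 + 1, fun V _ χ hsym S hS => ?_⟩
      obtain ⟨v, hv⟩ : S.Nonempty := Finset.card_pos.mp (by omega)
      set T := S.erase v with hT
      have hTcard : T.card = S.card - 1 := Finset.card_erase_of_mem hv
      set T1 := T.filter (fun x => χ v x = true) with hT1
      set T2 := T.filter (fun x => ¬ (χ v x = true)) with hT2
      have hsum : T1.card + T2.card = T.card := Finset.card_filter_add_card_filter_not _
      have hcases : n1 ≤ T1.card ∨ n2 ≤ T2.card := by omega
      rcases hcases with hc | hc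
      · obtain ⟨c, A, hAsub, hmono, hcard⟩ := h1 V χ hsym T1 hc
        have hAS : A ⊆ S := hAsub.trans ((Finset.filter_subset _ _).trans (Finset.erase_subset _ _))
        have hvA : v ∉ A := fun h => (Finset.mem_erase.mp ((Finset.filter_subset _ _) (hAsub h))).1 rfl
        have hedge : ∀ z ∈ A, χ v z = true := fun z hz => (Finset.mem_filter.mp (hAsub hz)).2
        rcases hcard with ⟨rfl, hcard⟩ | ⟨rfl, hcard⟩
        · refine ⟨true, insert v A, Finset.insert_subset hv hAS, ?_, Or.inl ⟨rfl, by
            rw [Finset.card_insert_of_notMem hvA, hcard]⟩⟩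
          intro x hx y hy hxy
          rcases Finset.mem_insert.mp hx with hx' | hx'
          · rcases Finset.mem_insert.mp hy with hy' | hy'
            · exact absurd (hx'.trans hy'.symm) hxy
            · rw [hx']; exact hedge y hy'
          · rcases Finset.mem_insert.mp hy with hy' | hy'
            · rw [hy', hsym]; exact hedge x hx'
            · exact hmono x hx' y hy' hxy
        · exact ⟨false, A, hAS, hmono, Or.inr ⟨rfl, hcard⟩⟩
      · obtain ⟨c, A, hAsub, hmono, hcard⟩ := h2 V χ hsym T2 hc
        have hAS : A ⊆ S := hAsub.trans ((Finset.filter_subset _ _).trans (Finset.erase_subset _ _))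
        have hvA : v ∉ A := fun h => (Finset.mem_erase.mp ((Finset.filter_subset _ _) (hAsub h))).1 rfl
        have hedge : ∀ z ∈ A, χ v z = false := fun z hz => by
          have := (Finset.mem_filter.mp (hAsub hz)).2
          simpa using this
        rcases hcard with ⟨rfl, hcard⟩ | ⟨rfl, hcard⟩
        · exact ⟨true, A, hAS, hmono, Or.inl ⟨rfl, hcard⟩⟩
        · refine ⟨false, insert v A, Finset.insert_subset hv hAS, ?_, Or.inr ⟨rfl, by
            rw [Finset.card_insert_of_notMem hvA, hcard]⟩⟩
          intro x hx y hy hxy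
          rcases Finset.mem_insert.mp hx with hx' | hx'
          · rcases Finset.mem_insert.mp hy with hy' | hy'
            · exact absurd (hx'.trans hy'.symm) hxy
            · rw [hx']; exact hedge y hy'
          · rcases Finset.mem_insert.mp hy with hy' | hy'
            · rw [hy', hsym]; exact hedge x hx'
            · exact hmono x hx' y hy' hxy

/-- The Ramsey-type property: every symmetric colouring has a monochromatic
`k`-clique inside `S`. -/
def RamProp (N0 k : ℕ) (S : Finset (Fin N0)) : Prop :=
  ∀ χ : Fin N0 → Fin N0 → Bool, (∀ x y, χ x y = χ y x) →
    ∃ (c : Bool) (A : Finset (Fin N0)), A ⊆ S ∧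
      (∀ x ∈ A, ∀ y ∈ A, x ≠ y → χ x y = c) ∧ A.card = k

/-- `f(k,k) = 0`: the disjoint union `K_k + K_k` of two copies of `K_k` is not
Ramsey-equivalent to `K_k`. -/
theorem not_ramseyEquiv_clique_add_clique (k : ℕ) (hk : 2 ≤ k) :
    ¬ RamseyEquiv (SimpleGraph.completeGraph (Fin k)) (cliquesUnion k 1 k) := by
  classical
  intro h
  obtain ⟨N0, hN0⟩ := ramsey_aux (k + k) k k le_rfl
  have hRuniv : RamProp N0 k Finset.univ := by
    intro χ hsym
    obtain ⟨c, A, hsub, hmono, hcard⟩ := hN0 (Fin N0) χ hsym Finset.univ (by simp)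
    exact ⟨c, A, hsub, hmono, by rcases hcard with ⟨_, hc⟩ | ⟨_, hc⟩ <;> exact hc⟩
  set TT : Finset (Finset (Fin N0)) := Finset.univ.filter (RamProp N0 k) with hTT
  have hTTne : TT.Nonempty := ⟨Finset.univ, by simp [hTT, hRuniv]⟩
  obtain ⟨S, hSmem, hSmin⟩ := Finset.exists_min_image TT Finset.card hTTne
  have hRS : RamProp N0 k S := (Finset.mem_filter.mp hSmem).2
  have hSne : S.Nonempty := by
    obtain ⟨c, A, hsub, _, hcard⟩ := hRS (fun _ _ => true) (fun _ _ => rfl)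
    obtain ⟨a, ha⟩ : A.Nonempty := Finset.card_pos.mp (by omega)
    exact ⟨a, hsub ha⟩
  obtain ⟨v, hvS⟩ := hSne
  have herase : ∃ χ0 : Fin N0 → Fin N0 → Bool, (∀ x y, χ0 x y = χ0 y x) ∧
      ∀ (c : Bool) (A : Finset (Fin N0)), A ⊆ S.erase v →
        (∀ x ∈ A, ∀ y ∈ A, x ≠ y → χ0 x y = c) → A.card ≠ k := by
    by_contra hcon
    push_neg at hcon
    have hR : RamProp N0 k (S.erase v) := by
      intro χ hsym
      obtain ⟨c, A, h1, h2, h3⟩ := hcon χ hsym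
      exact ⟨c, A, h1, h2, h3⟩
    have hmem : S.erase v ∈ TT := Finset.mem_filter.mpr ⟨Finset.mem_univ _, hR⟩
    have := hSmin _ hmem
    have hlt : (S.erase v).card < S.card := Finset.card_erase_lt_of_mem hvS
    omega
  obtain ⟨χ0, hχ0sym, hχ0⟩ := herase
  -- The graph: complete graph on S (as a graph on Fin N0)
  set G : SimpleGraph (Fin N0) := SimpleGraph.fromRel (fun x y => x ∈ S ∧ y ∈ S) with hG
  -- G is Ramsey for K_k
  have hram : IsRamseyFor (SimpleGraph.completeGraph (Fin k)) G := by
    intro ψ hsym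
    obtain ⟨c, A, hsub, hmono, hcard⟩ := hRS ψ hsym
    refine ⟨c, (A.orderEmbOfFin hcard).toEmbedding, ?_, ?_⟩
    · intro a b hab
      have hne : a ≠ b := by simpa [SimpleGraph.completeGraph] using hab
      have hne' : A.orderEmbOfFin hcard a ≠ A.orderEmbOfFin hcard b :=
        fun hcon => hne ((A.orderEmbOfFin hcard).injective hcon)
      exact SimpleGraph.fromRel_adj .. |>.mpr ⟨hne', Or.inl ⟨hsub (A.orderEmbOfFin_mem hcard a),
        hsub (A.orderEmbOfFin_mem hcard b)⟩⟩
    · intro a b hab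
      have hne : a ≠ b := by simpa [SimpleGraph.completeGraph] using hab
      exact hmono _ (A.orderEmbOfFin_mem hcard a) _ (A.orderEmbOfFin_mem hcard b)
        (fun hcon => hne ((A.orderEmbOfFin hcard).injective hcon))
  -- The colouring with no monochromatic K_k + K_k
  set χ : Fin N0 → Fin N0 → Bool :=
    fun x y => if x ∈ S.erase v ∧ y ∈ S.erase v then χ0 x y else true with hχ
  have hχsym : ∀ x y, χ x y = χ y x := by
    intro x y
    simp only [hχ]
    by_cases hxy : x ∈ S.erase v ∧ y ∈ S.erase v
    · rw [if_pos hxy, if_pos ⟨hxy.2, hxy.1⟩, hχ0sym]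
    · rw [if_neg hxy, if_neg (fun hcon => hxy ⟨hcon.2, hcon.1⟩)]
  obtain ⟨c, f, hadj, hcol⟩ := (h N0 G).mp hram χ hχsym
  -- key: every monochromatic clique of size k passes through v
  have key : ∀ g : Fin k → Fin N0, Function.Injective g →
      (∀ a b : Fin k, a ≠ b → G.Adj (g a) (g b)) →
      (∀ a b : Fin k, a ≠ b → χ (g a) (g b) = c) → ∃ a, g a = v := by
    intro g hinj hgadj hgcol
    by_contra hno
    push_neg at hno
    have hgS : ∀ a, g a ∈ S := by
      intro a
      have h0 : (0 : ℕ) < k := by omega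
      have h1 : (1 : ℕ) < k := by omega
      obtain ⟨b, hab⟩ : ∃ b : Fin k, a ≠ b := by
        by_cases hcase : a = ⟨0, h0⟩
        · exact ⟨⟨1, h1⟩, by simp [hcase, Fin.ext_iff]⟩
        · exact ⟨⟨0, h0⟩, hcase⟩
      have := hgadj a b hab
      rw [hG, SimpleGraph.fromRel_adj] at this
      rcases this.2 with ⟨h', _⟩ | ⟨_, h'⟩ <;> exact h'
    have hgE : ∀ a, g a ∈ S.erase v := fun a => Finset.mem_erase.mpr ⟨hno a, hgS a⟩
    refine hχ0 c (Finset.univ.image g) ?_ ?_ ?_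
    · intro x hx
      obtain ⟨a, _, rfl⟩ := Finset.mem_image.mp hx
      exact hgE a
    · intro x hx y hy hxy
      obtain ⟨a, _, rfl⟩ := Finset.mem_image.mp hx
      obtain ⟨b, _, rfl⟩ := Finset.mem_image.mp hy
      have hab : a ≠ b := fun hcon => hxy (by rw [hcon])
      have := hgcol a b hab
      simp only [hχ] at this
      rwa [if_pos ⟨hgE a, hgE b⟩] at this
    · rw [Finset.card_image_of_injective _ hinj, Finset.card_univ, Fintype.card_fin]
  -- the two cliques
  have hadj1 : ∀ a b : Fin k, a ≠ b → (cliquesUnion k 1 k).Adj (Sum.inl a) (Sum.inl b) := by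
    intro a b hab
    exact SimpleGraph.fromRel_adj .. |>.mpr ⟨by simpa using hab, Or.inl (Or.inl ⟨a, b, rfl, rfl⟩)⟩
  have hadj2 : ∀ a b : Fin k, a ≠ b →
      (cliquesUnion k 1 k).Adj (Sum.inr (0, a)) (Sum.inr (0, b)) := by
    intro a b hab
    exact SimpleGraph.fromRel_adj .. |>.mpr ⟨by simpa using hab,
      Or.inl (Or.inr ⟨0, a, b, rfl, rfl⟩)⟩
  obtain ⟨a1, ha1⟩ := key (fun a => f (Sum.inl a))
    (fun x y hxy => Sum.inl_injective (f.injective hxy))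
    (fun a b hab => hadj _ _ (hadj1 a b hab)) (fun a b hab => hcol _ _ (hadj1 a b hab))
  obtain ⟨a2, ha2⟩ := key (fun a => f (Sum.inr (0, a)))
    (fun x y hxy => by simpa using f.injective hxy)
    (fun a b hab => hadj _ _ (hadj2 a b hab)) (fun a b hab => hcol _ _ (hadj2 a b hab))
  have : Sum.inl a1 = (Sum.inr (0, a2) : Fin k ⊕ Fin 1 × Fin k) :=
    f.injective (ha1.trans ha2.symm)
  simp at this
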